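/- arXiv:1207.2379 — 4 statements merged into one kernel-verified Lean document; each statement's English description precedes it below -/
import Mathlib

section
/- A 132-avoiding permutation of {1,...,n} is uniquely determined by the set of positions of its left-to-right minima together with the set of values that are left-to-right minima. That is, if two 132-avoiding permutations of the same length have the same set of positions of left-to-right minima and the same set of values of left-to-right minima, then they are equal. -/
/-- `p i` is a left-to-right minimum. -/
def LTRMin {n : ℕ} (p : Equiv.Perm (Fin n)) (i : Fin n) : Prop := ∀ j < i, p i < p j

def Avoids132 {n : ℕ} (p : Equiv.Perm (Fin n)) : Prop :=
  ¬ ∃ i j k : Fin n, i < j ∧ j < k ∧ p i < p k ∧ p k < p j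

lemma step132 {n : ℕ} (p q : Equiv.Perm (Fin n)) (hq : Avoids132 q)
    (hpos : ∀ i, LTRMin p i → LTRMin q i)
    (hval : ∀ v, LTRMin q (q.symm v) → LTRMin p (p.symm v))
    (j : Fin n) (IH : ∀ i, i < j → p i = q i) : ¬ (p j < q j) := by
  intro hlt
  by_cases hm : LTRMin p j
  · have hqj : LTRMin q j := hpos j hm
    have h1 : LTRMin q (q.symm (q j)) := by simpa using hqj
    have h2 : LTRMin p (p.symm (q j)) := hval _ h1
    set k := p.symm (q j) with hk
    have hpk : p k = q j := p.apply_symm_apply _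
    rcases lt_trichotomy k j with h | h | h
    · have h3 : q k = q j := by rw [← IH k h, hpk]
      exact absurd (q.injective h3) h.ne
    · rw [h] at hpk
      exact hlt.ne hpk
    · have h4 : p k < p j := h2 j h
      rw [hpk] at h4
      exact absurd hlt (not_lt.mpr h4.le)
  · obtain ⟨i1, hi1, hle⟩ : ∃ i, i < j ∧ p i ≤ p j := by
      simpa [LTRMin, not_forall, not_lt] using hm
    have hne : (Finset.Iio j).Nonempty := ⟨i1, Finset.mem_Iio.mpr hi1⟩
    obtain ⟨i0, hi0mem, hi0min⟩ := Finset.exists_min_image (Finset.Iio j) (fun i => p i) hne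
    have hi0 : i0 < j := Finset.mem_Iio.mp hi0mem
    have hmle : p i0 ≤ p j := le_trans (hi0min i1 (Finset.mem_Iio.mpr hi1)) hle
    have hmlt : p i0 < p j :=
      lt_of_le_of_ne hmle (fun h => hi0.ne (p.injective h))
    set k := q.symm (p j) with hk
    have hqk : q k = p j := q.apply_symm_apply _
    rcases lt_trichotomy k j with h | h | h
    · have h3 : p k = p j := by rw [IH k h, hqk]
      exact absurd (p.injective h3) h.ne
    · rw [h] at hqk
      exact hlt.ne hqk.symm
    · refine hq ⟨i0, j, k, hi0, h, ?_, ?_⟩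
      · rw [hqk, ← IH i0 hi0]; exact hmlt
      · rw [hqk]; exact hlt

/-- A 132-avoiding permutation is determined by the positions and the values
of its left-to-right minima. -/
theorem stmt9 {n : ℕ} (p q : Equiv.Perm (Fin n))
    (hp : Avoids132 p) (hq : Avoids132 q)
    (hpos : ∀ i : Fin n, LTRMin p i ↔ LTRMin q i)
    (hval : ∀ v : Fin n, LTRMin p (p.symm v) ↔ LTRMin q (q.symm v)) :
    p = q := by
  have key : ∀ j : Fin n, (∀ i, i < j → p i = q i) → p j = q j := by
    intro j IH
    have h1 := step132 p q hq (fun i => (hpos i).mp) (fun v => (hval v).mpr) j IH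
    have h2 := step132 q p hp (fun i => (hpos i).mpr) (fun v => (hval v).mp) j
      (fun i hij => (IH i hij).symm)
    exact le_antisymm (not_lt.mp h2) (not_lt.mp h1)
  exact Equiv.ext fun x => wellFounded_lt.induction x key
end

section
/- A 213-avoiding permutation of {1,...,n} is uniquely determined by the set of positions of its right-to-left maxima together with the set of values that are right-to-left maxima. -/
/-- `p i` is a right-to-left maximum. -/
def RTLMax {n : ℕ} (p : Equiv.Perm (Fin n)) (i : Fin n) : Prop := ∀ j, i < j → p j < p i

def Avoids213 {n : ℕ} (p : Equiv.Perm (Fin n)) : Prop :=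
  ¬ ∃ i j k : Fin n, i < j ∧ j < k ∧ p j < p i ∧ p i < p k

lemma key_step {n : ℕ} (p q : Equiv.Perm (Fin n))
    (hp : Avoids213 p)
    (hpos : ∀ i : Fin n, RTLMax p i ↔ RTLMax q i)
    (hval : ∀ v : Fin n, RTLMax p (p.symm v) ↔ RTLMax q (q.symm v))
    (i : Fin n) (hsuf : ∀ j, i < j → p j = q j) (hlt : p i < q i) : False := by
  by_cases hR : RTLMax p i
  · -- the value `p i` is an RTL-max value of p, hence of q
    have hq1 : RTLMax q (q.symm (p i)) := by
      refine (hval (p i)).mp ?_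
      rwa [Equiv.symm_apply_apply]
    have hmi : q.symm (p i) < i := by
      rcases lt_trichotomy (q.symm (p i)) i with h | h | h
      · exact h
      · exfalso
        have h1 : q (q.symm (p i)) = q i := by rw [h]
        rw [Equiv.apply_symm_apply] at h1
        exact absurd h1 (ne_of_lt hlt)
      · exfalso
        have h1 : p (q.symm (p i)) = q (q.symm (p i)) := hsuf _ h
        rw [Equiv.apply_symm_apply] at h1
        have h2 := hR _ h
        rw [h1] at h2
        exact lt_irrefl _ h2
    have h3 := hq1 i hmi
    rw [Equiv.apply_symm_apply] at h3
    exact lt_irrefl _ (hlt.trans h3)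
  · have hqn : ¬ RTLMax q i := fun h => hR ((hpos i).mpr h)
    unfold RTLMax at hqn
    push_neg at hqn
    obtain ⟨c, hic, hqc⟩ := hqn
    have hqc' : q i < q c :=
      lt_of_le_of_ne hqc (q.injective.ne (ne_of_gt hic)).symm
    have hi' : p.symm (q i) < i := by
      rcases lt_trichotomy (p.symm (q i)) i with h | h | h
      · exact h
      · exfalso
        have h1 : p (p.symm (q i)) = p i := by rw [h]
        rw [Equiv.apply_symm_apply] at h1
        exact absurd h1.symm (ne_of_lt hlt)
      · exfalso
        have h1 : p (p.symm (q i)) = q (p.symm (q i)) := hsuf _ h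
        rw [Equiv.apply_symm_apply] at h1
        have h2 := q.injective h1
        rw [← h2] at h
        exact lt_irrefl _ h
    refine hp ⟨p.symm (q i), i, c, hi', hic, ?_, ?_⟩
    · rw [Equiv.apply_symm_apply]; exact hlt
    · rw [Equiv.apply_symm_apply, hsuf c hic]; exact hqc'

/-- A 213-avoiding permutation is determined by the positions and the values
of its right-to-left maxima. -/
theorem stmt10 {n : ℕ} (p q : Equiv.Perm (Fin n))
    (hp : Avoids213 p) (hq : Avoids213 q)
    (hpos : ∀ i : Fin n, RTLMax p i ↔ RTLMax q i)
    (hval : ∀ v : Fin n, RTLMax p (p.symm v) ↔ RTLMax q (q.symm v)) :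
    p = q := by
  by_contra hne
  have hex : ∃ i, p i ≠ q i := by
    by_contra h
    push_neg at h
    exact hne (Equiv.ext h)
  classical
  set S : Finset (Fin n) := Finset.univ.filter (fun i => p i ≠ q i) with hS
  have hSne : S.Nonempty := by
    obtain ⟨i, hi⟩ := hex
    exact ⟨i, by simp [hS, hi]⟩
  set i := S.max' hSne with hidef
  have hiS : i ∈ S := S.max'_mem hSne
  have hine : p i ≠ q i := by
    simpa [hS] using hiS
  have hsuf : ∀ j, i < j → p j = q j := by
    intro j hj
    by_contra hcon
    have hjS : j ∈ S := by simp [hS, hcon]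
    exact absurd (S.le_max' j hjS) (not_le_of_gt hj)
  rcases lt_trichotomy (p i) (q i) with h | h | h
  · exact key_step p q hp hpos hval i hsuf h
  · exact hine h
  · exact key_step q p hq (fun i => (hpos i).symm) (fun v => (hval v).symm) i
      (fun j hj => (hsuf j hj).symm) h
end

section
/- In a 132-avoiding permutation, the left-to-right minima occur in decreasing order, and every entry that is not a left-to-right minimum, when positions are processed left to right, equals the smallest remaining value larger than the closest left-to-right minimum to its left. -/
/-- In a 132-avoiding permutation the left-to-right minima occur in decreasing order,
and every non-minimum entry is the smallest value not yet used that is larger than the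
closest left-to-right minimum on its left. -/
theorem stmt11 {n : ℕ} (p : Equiv.Perm (Fin n)) (hp : Avoids132 p) :
    (∀ i j : Fin n, i < j → LTRMin p i → LTRMin p j → p j < p i) ∧
    (∀ i : Fin n, ¬ LTRMin p i →
      ∃ j : Fin n, j < i ∧ LTRMin p j ∧ (∀ k : Fin n, j < k → k < i → ¬ LTRMin p k) ∧
        p j < p i ∧
        ∀ v : Fin n, p j < v → (∀ k < i, p k ≠ v) → p i ≤ v) := by
  constructor
  · intro i j hij _ hj
    exact hj i hij
  · intro i hi
    unfold LTRMin at hi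
    push_neg at hi
    obtain ⟨k0, hk0i, hk0⟩ := hi
    set S : Finset (Fin n) := Finset.univ.filter (· < i) with hSdef
    have hS : S.Nonempty := ⟨k0, by simp [hSdef, hk0i]⟩
    obtain ⟨j, hjS, hjmin⟩ := S.exists_min_image p hS
    have hji : j < i := by simpa [hSdef] using hjS
    have hmem : ∀ k : Fin n, k < i → p j ≤ p k := fun k hk =>
      hjmin k (by simp [hSdef, hk])
    refine ⟨j, hji, ?_, ?_, ?_, ?_⟩
    · intro k hk
      have h1 := hmem k (hk.trans hji)
      exact lt_of_le_of_ne h1 fun e => absurd (p.injective e) (ne_of_gt hk)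
    · intro k hjk hki hLk
      exact absurd (hmem k hki) (not_le.mpr (hLk j hjk))
    · have h1 := hmem k0 hk0i
      have h2 : p j ≠ p i := fun e => absurd (p.injective e) (ne_of_lt hji)
      exact lt_of_le_of_ne (h1.trans hk0) h2
    · intro v hv hvnot
      by_contra h
      push_neg at h
      set m := p.symm v with hm
      have hpm : p m = v := p.apply_symm_apply v
      have him : ¬ m < i := fun hmi => hvnot m hmi hpm
      have hmne : m ≠ i := fun e => absurd (e ▸ hpm) (ne_of_gt h)
      have him' : i < m := lt_of_le_of_ne (not_lt.mp him) (Ne.symm hmne)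
      exact hp ⟨j, i, m, hji, him', hpm ▸ hv, hpm ▸ h⟩
end

section
/- For all positive integers n, the number of 1324-avoiding permutations of length n is less than 16^n. -/
def Avoids1324 {n : ℕ} (p : Equiv.Perm (Fin n)) : Prop :=
  ¬ ∃ i₁ i₂ i₃ i₄ : Fin n, i₁ < i₂ ∧ i₂ < i₃ ∧ i₃ < i₄ ∧
    p i₁ < p i₃ ∧ p i₃ < p i₂ ∧ p i₂ < p i₄

section Aux

def Blue {n : ℕ} (p : Equiv.Perm (Fin n)) (i : Fin n) : Prop :=
  ∃ (x y : Fin n) (_ : x < y) (_ : y < i),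
    ¬ Blue p x ∧ ¬ Blue p y ∧ p x < p i ∧ p i < p y
termination_by i.val
decreasing_by
  · exact Fin.lt_def.mp (lt_trans ‹x < y› ‹y < i›)
  · exact Fin.lt_def.mp ‹y < i›

lemma blue_iff {n : ℕ} (p : Equiv.Perm (Fin n)) (i : Fin n) :
    Blue p i ↔ ∃ x y : Fin n, x < y ∧ y < i ∧
      ¬ Blue p x ∧ ¬ Blue p y ∧ p x < p i ∧ p i < p y := by
  rw [Blue]
  constructor
  · rintro ⟨x, y, h1, h2, h⟩; exact ⟨x, y, h1, h2, h⟩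
  · rintro ⟨x, y, h1, h2, h⟩; exact ⟨x, y, h1, h2, h⟩

lemma red132 {n : ℕ} (p : Equiv.Perm (Fin n)) :
    ∀ a, ¬ Blue p a → ∀ b, ¬ Blue p b → ∀ c, ¬ Blue p c →
    a < b → b < c → ¬(p a < p c ∧ p c < p b) := by
  intro a ha b hb c hc hab hbc ⟨h1, h2⟩
  exact hc ((blue_iff p c).mpr ⟨a, b, hab, hbc, ha, hb, h1, h2⟩)

lemma blue213 {n : ℕ} (p : Equiv.Perm (Fin n)) (hp : Avoids1324 p) :
    ∀ i j k : Fin n, Blue p i → Blue p j → i < j → j < k →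
    ¬(p j < p i ∧ p i < p k) := by
  intro i j k hi hj hij hjk ⟨hji, hik⟩
  obtain ⟨a2, b2, hab2, hb2i, ha2r, hb2r, hv1, hv2⟩ := (blue_iff p i).mp hi
  have hkb2 : p k < p b2 := by
    rcases lt_trichotomy (p b2) (p k) with h | h | h
    · exact absurd ⟨a2, b2, i, k, hab2, hb2i, lt_trans hij hjk, hv1, hv2, h⟩ hp
    · exact absurd (p.injective h) (ne_of_lt (lt_trans hb2i (lt_trans hij hjk)))
    · exact h
  have hja2 : p j < p a2 := by
    rcases lt_trichotomy (p a2) (p j) with h | h | h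
    · exact absurd ⟨a2, i, j, k, lt_trans hab2 hb2i, hij, hjk, h, hji, hik⟩ hp
    · exact absurd (p.injective h) (ne_of_lt (lt_trans (lt_trans hab2 hb2i) hij))
    · exact h
  obtain ⟨a1, b1, hab1, hb1j, ha1r, hb1r, hw1, hw2⟩ := (blue_iff p j).mp hj
  have hkb1 : p k < p b1 := by
    rcases lt_trichotomy (p b1) (p k) with h | h | h
    · exact absurd ⟨a1, b1, j, k, hab1, hb1j, hjk, hw1, hw2, h⟩ hp
    · exact absurd (p.injective h) (ne_of_lt (lt_trans hb1j hjk))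
    · exact h
  have hia1 : i < a1 := by
    rcases lt_trichotomy a1 i with h | h | h
    · exact absurd ⟨a1, i, j, k, h, hij, hjk, hw1, hji, hik⟩ hp
    · exact absurd (h ▸ hw1) (asymm hji)
    · exact h
  have hb2b1 : b2 < b1 := lt_trans hb2i (lt_trans hia1 hab1)
  rcases lt_trichotomy (p b1) (p b2) with h | h | h
  · exact hb1r ((blue_iff p b1).mpr ⟨a2, b2, hab2, hb2b1, ha2r, hb2r,
      lt_trans hv1 (lt_trans hik hkb1), h⟩)
  · exact absurd (p.injective h) (ne_of_gt hb2b1)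
  · exact absurd ⟨a2, b2, i, b1, hab2, hb2i, lt_trans hia1 hab1, hv1, hv2, h⟩ hp

def Special {n : ℕ} (p : Equiv.Perm (Fin n)) (i : Fin n) : Prop :=
  (Blue p i ∧ ∀ t, i < t → Blue p t → p t < p i) ∨
  (¬ Blue p i ∧ ∀ t, t < i → ¬ Blue p t → p i < p t)

lemma special_red {n : ℕ} {p : Equiv.Perm (Fin n)} {i : Fin n} (h : ¬ Blue p i) :
    Special p i ↔ ∀ t, t < i → ¬ Blue p t → p i < p t :=
  ⟨fun h' => h'.elim (fun hh => absurd hh.1 h) And.right, fun c => Or.inr ⟨h, c⟩⟩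

lemma special_blue {n : ℕ} {p : Equiv.Perm (Fin n)} {i : Fin n} (h : Blue p i) :
    Special p i ↔ ∀ t, i < t → Blue p t → p t < p i :=
  ⟨fun h' => h'.elim And.right (fun hh => absurd h hh.1), fun c => Or.inl ⟨h, c⟩⟩

lemma special_zero {n : ℕ} (p : Equiv.Perm (Fin (n+1))) : Special p 0 := by
  have hb : ¬ Blue p 0 := by
    rw [blue_iff]
    rintro ⟨x, y, _, hy, -⟩
    exact absurd hy (by simp [Fin.lt_def])
  exact Or.inr ⟨hb, fun t ht _ => absurd ht (by simp [Fin.lt_def])⟩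

lemma core {α β : Type*} [LinearOrder α] [LinearOrder β] [WellFoundedLT α]
    (S : Set α) (f g : α → β)
    (finj : ∀ ⦃a b : α⦄, f a = f b → a = b) (ginj : ∀ ⦃a b : α⦄, g a = g b → a = b)
    (hval : ∀ v : β, (∃ a ∈ S, f a = v) ↔ (∃ a ∈ S, g a = v))
    (hf : ∀ a ∈ S, ∀ b ∈ S, ∀ c ∈ S, a < b → b < c → ¬(f a < f c ∧ f c < f b))
    (hg : ∀ a ∈ S, ∀ b ∈ S, ∀ c ∈ S, a < b → b < c → ¬(g a < g c ∧ g c < g b))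
    (hmin : ∀ a ∈ S, ((∀ b ∈ S, b < a → f a < f b) ↔ (∀ b ∈ S, b < a → g a < g b)))
    (hminval : ∀ v : β, (∃ a ∈ S, (∀ b ∈ S, b < a → f a < f b) ∧ f a = v) ↔
                   (∃ a ∈ S, (∀ b ∈ S, b < a → g a < g b) ∧ g a = v)) :
    ∀ a ∈ S, f a = g a := by
  intro a
  induction a using WellFoundedLT.induction with
  | ind a IH =>
  intro ha
  by_cases hMf : ∀ b ∈ S, b < a → f a < f b
  · obtain ⟨c, hc, hMc, hcv⟩ := (hminval (f a)).mp ⟨a, ha, hMf, rfl⟩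
    rcases lt_trichotomy c a with h | h | h
    · exfalso
      have : f c = f a := (IH c h hc).symm ▸ hcv
      exact absurd (finj this) (ne_of_lt h)
    · exact (h ▸ hcv).symm
    · have h1 : f a < g a := hcv ▸ hMc a ha h
      obtain ⟨c', hc', hMc', hcv'⟩ := (hminval (g a)).mpr ⟨a, ha, (hmin a ha).mp hMf, rfl⟩
      rcases lt_trichotomy c' a with h' | h' | h'
      · exfalso
        have : g c' = g a := (IH c' h' hc') ▸ hcv'
        exact absurd (ginj this) (ne_of_lt h')
      · exact h' ▸ hcv'
      · have h2 : g a < f a := hcv' ▸ hMc' a ha h'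
        exact absurd (h1.trans h2) (lt_irrefl _)
  · push_neg at hMf
    obtain ⟨b0, hb0S, hb0a, hb0v⟩ := hMf
    have hb0v' : f b0 < f a := by
      rcases lt_or_eq_of_le hb0v with h | h
      · exact h
      · exact absurd (finj h) (ne_of_lt hb0a)
    rcases lt_trichotomy (f a) (g a) with hlt | heq | hgt
    · exfalso
      obtain ⟨c, hc, hcv⟩ := (hval (f a)).mp ⟨a, ha, rfl⟩
      have hca : a < c := by
        rcases lt_trichotomy c a with h | h | h
        · exact absurd ((IH c h hc).trans hcv) fun hh => (ne_of_lt h) (finj hh)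
        · exact absurd (h ▸ hcv).symm (ne_of_lt hlt)
        · exact h
      exact hg b0 hb0S a ha c hc hb0a hca
        ⟨(IH b0 hb0a hb0S) ▸ (hcv.symm ▸ hb0v'), hcv.symm ▸ hlt⟩
    · exact heq
    · exfalso
      have hMg : ¬ ∀ b ∈ S, b < a → g a < g b := fun h => (by
        exact absurd ((hmin a ha).mpr h) (by push_neg; exact ⟨b0, hb0S, hb0a, hb0v⟩))
      push_neg at hMg
      obtain ⟨b1, hb1S, hb1a, hb1v⟩ := hMg
      have hb1v' : g b1 < g a := by
        rcases lt_or_eq_of_le hb1v with h | h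
        · exact h
        · exact absurd (ginj h) (ne_of_lt hb1a)
      obtain ⟨c, hc, hcv⟩ := (hval (g a)).mpr ⟨a, ha, rfl⟩
      have hca : a < c := by
        rcases lt_trichotomy c a with h | h | h
        · exact absurd ((IH c h hc).symm.trans hcv) fun hh => (ne_of_lt h) (ginj hh)
        · exact absurd (h ▸ hcv) (ne_of_gt hgt)
        · exact h
      exact hf b1 hb1S a ha c hc hb1a hca
        ⟨(IH b1 hb1a hb1S).symm ▸ (hcv.symm ▸ hb1v'), hcv.symm ▸ hgt⟩

end Aux

lemma exval {n : ℕ} (r : Equiv.Perm (Fin n)) (P : Fin n → Prop) (v : Fin n) :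
    (∃ a, P a ∧ r a = v) ↔ P (r.symm v) := by
  constructor
  · rintro ⟨a, ha, rfl⟩; rwa [r.symm_apply_apply]
  · intro h; exact ⟨r.symm v, h, r.apply_symm_apply v⟩

lemma inj_main {n : ℕ} (p q : Equiv.Perm (Fin n)) (hp : Avoids1324 p) (hq : Avoids1324 q)
    (H1 : ∀ i, Blue p i ↔ Blue q i)
    (H2 : ∀ v, Blue p (p.symm v) ↔ Blue q (q.symm v))
    (H3 : ∀ i, Special p i ↔ Special q i)
    (H4 : ∀ v, Special p (p.symm v) ↔ Special q (q.symm v)) : p = q := by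
  haveI : WellFoundedLT (Fin n) := Finite.to_wellFoundedLT
  haveI : WellFoundedLT (Fin n)ᵒᵈ := Finite.to_wellFoundedLT
  have B2 : ∀ a : Fin n, Blue p a ↔ Blue q (q.symm (p a)) := by
    intro a; have := H2 (p a); rwa [p.symm_apply_apply] at this
  have S4 : ∀ a : Fin n, Special p a ↔ Special q (q.symm (p a)) := by
    intro a; have := H4 (p a); rwa [p.symm_apply_apply] at this
  have B2' : ∀ a : Fin n, Blue q a ↔ Blue p (p.symm (q a)) := by
    intro a; have := H2 (q a); rw [q.symm_apply_apply] at this; exact this.symm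
  have S4' : ∀ a : Fin n, Special q a ↔ Special p (p.symm (q a)) := by
    intro a; have := H4 (q a); rw [q.symm_apply_apply] at this; exact this.symm
  have redeq : ∀ a ∈ {a : Fin n | ¬ Blue p a}, p a = q a := by
    refine core {a : Fin n | ¬ Blue p a} (⇑p) (⇑q) (fun a b h => p.injective h)
      (fun a b h => q.injective h) ?_ ?_ ?_ ?_ ?_
    · intro v
      calc (∃ a ∈ {a : Fin n | ¬ Blue p a}, p a = v)
          ↔ ¬ Blue p (p.symm v) := exval p (fun a => ¬ Blue p a) v
        _ ↔ ¬ Blue q (q.symm v) := not_congr (H2 v)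
        _ ↔ ¬ Blue p (q.symm v) := (not_congr (H1 _)).symm
        _ ↔ (∃ a ∈ {a : Fin n | ¬ Blue p a}, q a = v) := (exval q (fun a => ¬ Blue p a) v).symm
    · exact fun a ha b hb c hc hab hbc => red132 p a ha b hb c hc hab hbc
    · intro a ha b hb c hc hab hbc
      exact red132 q a (fun h => ha ((H1 a).mpr h)) b (fun h => hb ((H1 b).mpr h))
        c (fun h => hc ((H1 c).mpr h)) hab hbc
    · intro a ha
      have haq : ¬ Blue q a := fun h => ha ((H1 a).mpr h)
      constructor
      · intro h b hb hba
        have hs : Special q a := (H3 a).mp ((special_red ha).mpr fun t ht htr => h t htr ht)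
        exact ((special_red haq).mp hs) b hba (fun hh => hb ((H1 b).mpr hh))
      · intro h b hb hba
        have hs : Special p a := (H3 a).mpr ((special_red haq).mpr
          fun t ht htr => h t (fun hh => htr ((H1 t).mp hh)) ht)
        exact ((special_red ha).mp hs) b hba hb
    · intro v
      constructor
      · rintro ⟨a, ha, hM, rfl⟩
        have hs : Special q (q.symm (p a)) := (S4 a).mp
          ((special_red ha).mpr fun t ht htr => hM t htr ht)
        have hbq : ¬ Blue q (q.symm (p a)) := fun h => ha ((B2 a).mpr h)
        exact ⟨q.symm (p a), fun h => hbq ((H1 _).mp h),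
          fun b hb hba => ((special_red hbq).mp hs) b hba (fun hh => hb ((H1 b).mpr hh)),
          q.apply_symm_apply _⟩
      · rintro ⟨a, ha, hM, rfl⟩
        have haq : ¬ Blue q a := fun h => ha ((H1 a).mpr h)
        have hs : Special p (p.symm (q a)) := (S4' a).mp
          ((special_red haq).mpr fun t ht htr => hM t (fun hh => htr ((H1 t).mp hh)) ht)
        have hbp : ¬ Blue p (p.symm (q a)) := fun h => haq ((B2' a).mpr h)
        exact ⟨p.symm (q a), hbp,
          fun b hb hba => ((special_red hbp).mp hs) b hba hb,
          p.apply_symm_apply _⟩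
  have blueeq : ∀ a ∈ {a : (Fin n)ᵒᵈ | Blue p (OrderDual.ofDual a)},
      (fun x => OrderDual.toDual (p (OrderDual.ofDual x))) a
        = (fun x => OrderDual.toDual (q (OrderDual.ofDual x))) a := by
    refine core {a : (Fin n)ᵒᵈ | Blue p (OrderDual.ofDual a)}
      (fun x => OrderDual.toDual (p (OrderDual.ofDual x)))
      (fun x => OrderDual.toDual (q (OrderDual.ofDual x)))
      (fun a b h => p.injective h) (fun a b h => q.injective h) ?_ ?_ ?_ ?_ ?_
    · intro v
      show (∃ a, Blue p a ∧ p a = OrderDual.ofDual v) ↔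
        (∃ a, Blue p a ∧ q a = OrderDual.ofDual v)
      calc (∃ a, Blue p a ∧ p a = OrderDual.ofDual v)
          ↔ Blue p (p.symm (OrderDual.ofDual v)) := exval p (fun a => Blue p a) _
        _ ↔ Blue q (q.symm (OrderDual.ofDual v)) := H2 _
        _ ↔ Blue p (q.symm (OrderDual.ofDual v)) := (H1 _).symm
        _ ↔ (∃ a, Blue p a ∧ q a = OrderDual.ofDual v) := (exval q (fun a => Blue p a) _).symm
    · intro a ha b hb c hc hab hbc hcon
      exact blue213 p hp (OrderDual.ofDual c) (OrderDual.ofDual b) (OrderDual.ofDual a)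
        hc hb hbc hab ⟨hcon.2, hcon.1⟩
    · intro a ha b hb c hc hab hbc hcon
      exact blue213 q hq (OrderDual.ofDual c) (OrderDual.ofDual b) (OrderDual.ofDual a)
        ((H1 _).mp hc) ((H1 _).mp hb) hbc hab ⟨hcon.2, hcon.1⟩
    · intro a ha
      have haq : Blue q (OrderDual.ofDual a) := (H1 _).mp ha
      constructor
      · intro h b hb hba
        have hs : Special q (OrderDual.ofDual a) := (H3 _).mp ((special_blue ha).mpr
          fun t ht htb => h (OrderDual.toDual t) htb ht)
        exact ((special_blue haq).mp hs) (OrderDual.ofDual b) hba ((H1 _).mp hb)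
      · intro h b hb hba
        have hs : Special p (OrderDual.ofDual a) := (H3 _).mpr ((special_blue haq).mpr
          fun t ht htb => h (OrderDual.toDual t) ((H1 t).mpr htb) ht)
        exact ((special_blue ha).mp hs) (OrderDual.ofDual b) hba hb
    · intro v
      constructor
      · rintro ⟨a, ha, hM, hv⟩
        have hM' : ∀ t, OrderDual.ofDual a < t → Blue p t → p t < p (OrderDual.ofDual a) :=
          fun t ht htb => hM (OrderDual.toDual t) htb ht
        have hs : Special q (q.symm (p (OrderDual.ofDual a))) := (S4 _).mp
          ((special_blue ha).mpr hM')
        have hbq : Blue q (q.symm (p (OrderDual.ofDual a))) := (B2 _).mp ha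
        refine ⟨OrderDual.toDual (q.symm (p (OrderDual.ofDual a))), (H1 _).mpr hbq,
          fun b hb hba => ((special_blue hbq).mp hs) (OrderDual.ofDual b) hba ((H1 _).mp hb),
          ?_⟩
        show OrderDual.toDual (q (q.symm (p (OrderDual.ofDual a)))) = v
        rw [q.apply_symm_apply]; exact hv
      · rintro ⟨a, ha, hM, hv⟩
        have haq : Blue q (OrderDual.ofDual a) := (H1 _).mp ha
        have hM' : ∀ t, OrderDual.ofDual a < t → Blue q t → q t < q (OrderDual.ofDual a) :=
          fun t ht htb => hM (OrderDual.toDual t) ((H1 t).mpr htb) ht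
        have hs : Special p (p.symm (q (OrderDual.ofDual a))) := (S4' _).mp
          ((special_blue haq).mpr hM')
        have hbp : Blue p (p.symm (q (OrderDual.ofDual a))) := (B2' _).mp haq
        refine ⟨OrderDual.toDual (p.symm (q (OrderDual.ofDual a))), hbp,
          fun b hb hba => ((special_blue hbp).mp hs) (OrderDual.ofDual b) hba hb, ?_⟩
        show OrderDual.toDual (p (p.symm (q (OrderDual.ofDual a)))) = v
        rw [p.apply_symm_apply]; exact hv
  refine Equiv.ext fun i => ?_
  by_cases hbi : Blue p i
  · exact blueeq (OrderDual.toDual i) hbi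
  · exact redeq i hbi

/-- S_n(1324) < 16^n. -/
theorem stmt16 : ∀ n : ℕ, 1 ≤ n →
    Nat.card {p : Equiv.Perm (Fin n) // Avoids1324 p} < 16 ^ n := by
  intro n hn
  obtain ⟨m, rfl⟩ : ∃ m, n = m + 1 := ⟨n - 1, by omega⟩
  let F : {p : Equiv.Perm (Fin (m+1)) // Avoids1324 p} →
      (Fin (m+1) → Prop) × (Fin (m+1) → Prop) × (Fin (m+1) → Prop) × (Fin (m+1) → Prop) :=
    fun x => (fun i => Blue x.1 i, fun v => Blue x.1 (x.1.symm v),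
      fun i => Special x.1 i, fun v => Special x.1 (x.1.symm v))
  let G : Option {p : Equiv.Perm (Fin (m+1)) // Avoids1324 p} →
      (Fin (m+1) → Prop) × (Fin (m+1) → Prop) × (Fin (m+1) → Prop) × (Fin (m+1) → Prop) :=
    fun o => o.elim (fun _ => True, fun _ => True, fun _ => False, fun _ => True) F
  have key : ∀ x : {p : Equiv.Perm (Fin (m+1)) // Avoids1324 p},
      (fun i : Fin (m+1) => Special x.1 i) ≠ (fun _ => False) := by
    intro x h
    have h0 := congrFun h 0
    exact (h0 ▸ special_zero x.1)
  have hGinj : Function.Injective G := by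
    intro o1 o2 h
    match o1, o2 with
    | none, none => rfl
    | some x, none =>
      exact absurd (congrArg (fun t => t.2.2.1) h) (key x)
    | none, some x =>
      exact absurd (congrArg (fun t => t.2.2.1) h).symm (key x)
    | some x, some y =>
      have e1 : ∀ i, Blue x.1 i ↔ Blue y.1 i :=
        fun i => iff_of_eq (congrFun (congrArg (fun t => t.1) h) i)
      have e2 : ∀ v, Blue x.1 (x.1.symm v) ↔ Blue y.1 (y.1.symm v) :=
        fun v => iff_of_eq (congrFun (congrArg (fun t => t.2.1) h) v)
      have e3 : ∀ i, Special x.1 i ↔ Special y.1 i :=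
        fun i => iff_of_eq (congrFun (congrArg (fun t => t.2.2.1) h) i)
      have e4 : ∀ v, Special x.1 (x.1.symm v) ↔ Special y.1 (y.1.symm v) :=
        fun v => iff_of_eq (congrFun (congrArg (fun t => t.2.2.2) h) v)
      exact congrArg some (Subtype.ext (inj_main x.1 y.1 x.2 y.2 e1 e2 e3 e4))
  have hle := Nat.card_le_card_of_injective G hGinj
  have hcard : Nat.card ((Fin (m+1) → Prop) × (Fin (m+1) → Prop) × (Fin (m+1) → Prop) ×
      (Fin (m+1) → Prop)) = 16 ^ (m+1) := by
    rw [Nat.card_prod, Nat.card_prod, Nat.card_prod, Nat.card_fun]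
    simp only [Nat.card_eq_fintype_card, Fintype.card_fin, Fintype.card_prop]
    rw [show (16:ℕ) = 2*(2*(2*2)) by norm_num, mul_pow, mul_pow, mul_pow]
  rw [Finite.card_option, hcard] at hle
  omega
end
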